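/- In a one-player game there is a strategy admitting a continuum of consistent runs: the player has a strategy s such that the set of runs consistent with s has cardinality continuum. -/
import Mathlib


/-- Stages: non-positive integers. -/
abbrev Stage : Type := {n : ℤ // n ≤ 0}

/-- A run assigns an action to each stage. -/
abbrev Run (A : Type) : Type := Stage → A

/-- A position at stage `n` records the actions at all stages `k < n`. -/
abbrev Position (A : Type) (n : ℤ) : Type := {k : ℤ // k < n} → A

/-- The space of all positions. -/
abbrev Pos (A : Type) : Type := Σ n : Stage, Position A n.1

/-- The position induced by a run `r` at stage `n`. -/
def restrictRun {A : Type} (r : Run A) (n : Stage) : Position A n.1 :=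
  fun k => r ⟨k.1, le_trans k.2.le n.2⟩

/-- Iterate `m ↦ (m-1)/2` while odd; the root of the chain. -/
def rootNat (n : ℕ) : ℕ :=
  if n % 2 = 0 then n else rootNat ((n - 1) / 2)
decreasing_by omega

lemma rootNat_even (k : ℕ) : rootNat (2 * k) = 2 * k := by
  rw [rootNat]; simp [Nat.mul_mod_right]

lemma rootNat_odd (m : ℕ) : rootNat (2 * m + 1) = rootNat m := by
  rw [rootNat]
  have h : (2 * m + 1) % 2 ≠ 0 := by omega
  simp only [h, if_false]
  congr 1
  omega

/-- in the one-player game with actions `{0,1}`, there is a strategy whose set of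
consistent runs has cardinality continuum. -/
theorem strategy_with_continuum_consistent_runs :
    ∃ s : Pos (Fin 2) → Fin 2,
      Cardinal.mk {r : Run (Fin 2) | ∀ n : Stage, r n = s ⟨n, restrictRun r n⟩} =
        Cardinal.continuum := by
  refine ⟨fun p => p.2 ⟨2 * p.1.1 - 1, by have := p.1.2; omega⟩, ?_⟩
  set S := {r : Run (Fin 2) | ∀ n : Stage, r n = r ⟨2 * n.1 - 1, by have := n.2; omega⟩}
  have hset : {r : Run (Fin 2) | ∀ n : Stage,
      r n = (fun p : Pos (Fin 2) => p.2 ⟨2 * p.1.1 - 1, by have := p.1.2; omega⟩)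
        ⟨n, restrictRun r n⟩} = S := by
    ext r
    simp only [Set.mem_setOf_eq, restrictRun, S]
  rw [hset]
  apply le_antisymm
  · calc Cardinal.mk S ≤ Cardinal.mk (Run (Fin 2)) := Cardinal.mk_set_le S
    _ = 2 ^ Cardinal.mk Stage := by
        rw [Cardinal.mk_arrow]; simp [Cardinal.mk_fin]
    _ = Cardinal.continuum := by
        have : Cardinal.mk Stage = Cardinal.aleph0 := by
          have : Infinite Stage :=
            Infinite.of_injective (fun n : ℕ => (⟨-(n : ℤ), by omega⟩ : Stage))
              (by intro m n h; simpa using congrArg Subtype.val h)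
          exact Cardinal.mk_eq_aleph0 Stage
        rw [this, Cardinal.two_power_aleph0]
  · -- inject (ℕ → Fin 2) into S
    have : Cardinal.continuum = Cardinal.mk (ℕ → Fin 2) := by
      rw [Cardinal.mk_arrow]
      simp [Cardinal.mk_fin, Cardinal.two_power_aleph0]
    rw [this]
    have key : ∀ a : ℕ → Fin 2,
        (fun n : Stage => a (rootNat n.1.natAbs / 2)) ∈ S := by
      intro a n
      simp only
      congr 1
      have hn := n.2
      have h1 : (2 * n.1 - 1).natAbs = 2 * n.1.natAbs + 1 := by omega
      rw [h1, rootNat_odd]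
    refine Cardinal.mk_le_of_injective (f := fun a => (⟨fun n => a (rootNat n.1.natAbs / 2), key a⟩ : S)) ?_
    intro a b hab
    funext k
    have := congrFun (congrArg Subtype.val hab) ⟨-(2 * (k : ℤ)), by omega⟩
    have h2 : (-(2 * (k : ℤ))).natAbs = 2 * k := by
      simp [Int.natAbs_neg, Int.natAbs_mul]
    simp only [h2, rootNat_even] at this
    simpa using this
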